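/- Under the assumptions of the main S-DANE theorem (each f_i μ-convex with μ > 0, {f_i} with δ-SOD, δ > 0, λ = 2δ, accuracy condition Σ_{i=1}^n ‖∇F_{i,r}(x_{i,r+1})‖² ≤ (λ²/4) Σ_{i=1}^n ‖x_{i,r+1} − v^r‖² at every round), let x* minimize f, D := ‖x⁰ − x*‖, and let x̄^R be the weighted average of the iterates with weights p^r, p := 1 + μ/λ. Then for any ε > 0, if the number of rounds R satisfies R ≥ ((μ + 2δ)/μ) · ln(1 + μD²/(2ε)), it holds that f(x̄^R) − f(x*) ≤ ε. -/

import Mathlib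

open Finset RealInnerProductSpace

set_option maxHeartbeats 1000000

section Aux

variable {E : Type*} [NormedAddCommGroup E] [InnerProductSpace ℝ E]

omit [InnerProductSpace ℝ E] in
private lemma sdane_aux_trivial : True := trivial

private lemma sdane_young_inner (u v : E) (c : ℝ) (hc : 0 < c) :
    -((1/(2*c))*‖u‖^2 + (c/2)*‖v‖^2) ≤ ⟪u, v⟫ := by
  have h3 := (abs_le.mp (abs_real_inner_le_norm u v)).1
  have h2 : ‖u‖*‖v‖ ≤ (1/(2*c))*‖u‖^2 + (c/2)*‖v‖^2 := by
    have hr : (1/(2*c))*‖u‖^2 + (c/2)*‖v‖^2 - ‖u‖*‖v‖ = (1/(2*c)) * (‖u‖ - c*‖v‖)^2 := by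
      field_simp; ring
    have h0 : 0 ≤ (1/(2*c)) * (‖u‖ - c*‖v‖)^2 := by positivity
    linarith
  linarith

private lemma sdane_polar (a b c : E) : ⟪a - b, c - a⟫ = (‖c-b‖^2 - ‖a-b‖^2 - ‖c-a‖^2)/2 := by
  have h : c - b = (c-a) + (a-b) := by abel
  rw [h, norm_add_sq_real, real_inner_comm]
  ring

private lemma sdane_sum_young {n : ℕ} (d u : Fin n → E) (c : ℝ) (hc : 0 < c) :
    -((1/(2*c)) * ∑ i, ‖d i‖^2 + (c/2) * ∑ i, ‖u i‖^2) ≤ ∑ i, ⟪d i, u i⟫ := by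
  have h := Finset.sum_le_sum
    (fun i (_ : i ∈ Finset.univ) => sdane_young_inner (d i) (u i) c hc)
  calc -((1/(2*c)) * ∑ i, ‖d i‖^2 + (c/2) * ∑ i, ‖u i‖^2)
      = ∑ i, -((1/(2*c))*‖d i‖^2 + (c/2)*‖u i‖^2) := by
        rw [Finset.sum_neg_distrib, Finset.sum_add_distrib, ← Finset.mul_sum, ← Finset.mul_sum]
    _ ≤ ∑ i, ⟪d i, u i⟫ := h

private lemma sdane_mean_split {n : ℕ} (xi : Fin n → E) (z c : E)
    (hz : ∑ i, xi i = (n:ℝ) • z) :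
    ∑ i, ‖xi i - c‖^2 = ∑ i, ‖xi i - z‖^2 + (n:ℝ) * ‖z - c‖^2 := by
  have hzero : ∑ i, (xi i - z) = 0 := by
    rw [Finset.sum_sub_distrib, hz, Finset.sum_const, Finset.card_univ, Fintype.card_fin,
      sub_eq_zero]
    exact Nat.cast_smul_eq_nsmul ℝ n z
  have h1 : ∀ i : Fin n, ‖xi i - c‖^2 = ‖xi i - z‖^2 + 2*⟪xi i - z, z - c⟫ + ‖z - c‖^2 := by
    intro i
    have h : xi i - c = (xi i - z) + (z - c) := by abel
    rw [h, norm_add_sq_real]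
  calc ∑ i, ‖xi i - c‖^2
      = ∑ i, (‖xi i - z‖^2 + 2*⟪xi i - z, z - c⟫ + ‖z - c‖^2) :=
        Finset.sum_congr rfl fun i _ => h1 i
    _ = ∑ i, ‖xi i - z‖^2 + 2*⟪∑ i, (xi i - z), z - c⟫ + (n:ℝ) * ‖z - c‖^2 := by
        rw [Finset.sum_add_distrib, Finset.sum_add_distrib, ← Finset.mul_sum, sum_inner,
          Finset.sum_const, Finset.card_univ, Fintype.card_fin, nsmul_eq_mul]
    _ = ∑ i, ‖xi i - z‖^2 + (n:ℝ) * ‖z - c‖^2 := by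
        rw [hzero, inner_zero_left]; ring

end Aux

section Round

variable {E : Type*} [NormedAddCommGroup E] [InnerProductSpace ℝ E] [CompleteSpace E]

private lemma sdane_round {n : ℕ} (hn : 0 < n)
    (f' : Fin n → E → ℝ)
    (f : E → ℝ)
    (hgradf : ∀ y, ∑ i, gradient (f' i) y = (n:ℝ) • gradient f y)
    (hNf : ∀ y, (n:ℝ) * f y = ∑ i, f' i y)
    (μ : ℝ) (hμ : 0 < μ)
    (hconv : ∀ i, ∀ a b : E,
      f' i b ≥ f' i a + ⟪gradient (f' i) a, b - a⟫ + (μ / 2) * ‖a - b‖ ^ 2)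
    (lam : ℝ) (hlam0 : 0 < lam)
    (hSOD' : ∀ a b : E,
      ∑ i, ‖(gradient f a - gradient (f' i) a) - (gradient f b - gradient (f' i) b)‖^2
        ≤ (n:ℝ) * (lam^2/4) * ‖a-b‖^2)
    (xi : Fin n → E) (vv z v' : E)
    (hz : ∑ i, xi i = (n:ℝ) • z)
    (hv' : (lam + μ) • v' = lam • vv + μ • z - (1/(n:ℝ)) • ∑ i, gradient (f' i) (xi i))
    (hacc : ∑ i, ‖gradient (f' i) (xi i) + gradient f vv - gradient (f' i) vv
        + lam • (xi i - vv)‖^2 ≤ (lam^2/4) * ∑ i, ‖xi i - vv‖^2)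
    (xstar : E) :
    f z - f xstar ≤ (lam/2)*‖vv - xstar‖^2 - ((lam+μ)/2)*‖v' - xstar‖^2 := by
  have hN : (0:ℝ) < n := by exact_mod_cast hn
  have hlm : 0 < lam + μ := by linarith
  set g : Fin n → E := fun i => gradient (f' i) (xi i) + gradient f vv - gradient (f' i) vv
      + lam • (xi i - vv) with hgdef
  set dd : Fin n → E := fun i => (gradient f z - gradient (f' i) z)
      - (gradient f vv - gradient (f' i) vv) with hddef
  -- zero-sum facts
  have hzsum : ∀ y : E, ∑ i, (gradient f y - gradient (f' i) y) = 0 := by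
    intro y
    rw [Finset.sum_sub_distrib, hgradf y, Finset.sum_const, Finset.card_univ, Fintype.card_fin,
      sub_eq_zero]
    exact (Nat.cast_smul_eq_nsmul ℝ n _).symm
  have hxz : ∑ i, (xi i - z) = 0 := by
    rw [Finset.sum_sub_distrib, hz, Finset.sum_const, Finset.card_univ, Fintype.card_fin,
      sub_eq_zero]
    exact Nat.cast_smul_eq_nsmul ℝ n z
  have hxv : ∑ i, (xi i - vv) = (n:ℝ) • (z - vv) := by
    rw [Finset.sum_sub_distrib, hz, Finset.sum_const, Finset.card_univ, Fintype.card_fin,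
      smul_sub]
    congr 1
    exact (Nat.cast_smul_eq_nsmul ℝ n vv).symm
  -- sum of the g i
  have hsg : ∑ i, gradient (f' i) (xi i) = ∑ i, g i - (lam * (n:ℝ)) • (z - vv) := by
    have e : ∀ i, gradient (f' i) (xi i)
        = g i - (gradient f vv - gradient (f' i) vv) - lam • (xi i - vv) := by
      intro i; simp only [hgdef]; abel
    rw [Finset.sum_congr rfl fun i _ => e i, Finset.sum_sub_distrib, Finset.sum_sub_distrib,
      hzsum vv, sub_zero, ← Finset.smul_sum, hxv, smul_smul]
  have hG : ∑ i, g i = ((n:ℝ) * (lam + μ)) • (z - v') := by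
    have h2 : (lam + μ) • (z - v') = (1/(n:ℝ)) • ∑ i, g i := by
      rw [smul_sub, hv', hsg, smul_sub, smul_smul]
      have hc : (1/(n:ℝ)) * (lam * (n:ℝ)) = lam := by field_simp
      rw [hc]
      module
    have h3 := congrArg (fun w : E => (n:ℝ) • w) h2
    simp only [smul_smul] at h3
    rw [show (n:ℝ) * ((lam+μ)) = (n:ℝ)*(lam+μ) from rfl] at h3
    have hc2 : (n:ℝ) * (1/(n:ℝ)) = 1 := mul_one_div_cancel hN.ne'
    rw [hc2, one_smul] at h3
    exact h3.symm
  -- scalar abbreviations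
  have hSnn : (0:ℝ) ≤ ∑ i, ‖xi i - vv‖^2 := by positivity
  have hWnn : (0:ℝ) ≤ ∑ i, ‖xi i - z‖^2 := by positivity
  have hQnn : (0:ℝ) ≤ ‖z - vv‖^2 := by positivity
  set S : ℝ := ∑ i, ‖xi i - vv‖^2 with hSdef
  set W : ℝ := ∑ i, ‖xi i - z‖^2 with hWdef
  set Q : ℝ := ‖z - vv‖^2 with hQdef
  set Sst : ℝ := ∑ i, ‖xi i - xstar‖^2 with hSstdef
  -- convexity sums
  have step1 : (∑ i, f' i (xi i)) + (∑ i, ⟪gradient (f' i) (xi i), xstar - xi i⟫)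
      + (μ/2) * Sst ≤ (n:ℝ) * f xstar := by
    have h := Finset.sum_le_sum fun i (_ : i ∈ Finset.univ) => hconv i (xi i) xstar
    rw [Finset.sum_add_distrib, Finset.sum_add_distrib, ← Finset.mul_sum, ← hSstdef,
      ← hNf xstar] at h
    exact h
  have step2 : (n:ℝ) * f z + (∑ i, ⟪gradient (f' i) z, xi i - z⟫) + (μ/2) * W
      ≤ ∑ i, f' i (xi i) := by
    have h := Finset.sum_le_sum fun i (_ : i ∈ Finset.univ) => hconv i z (xi i)
    have e : ∀ i : Fin n, ‖z - xi i‖^2 = ‖xi i - z‖^2 := fun i => by rw [norm_sub_rev]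
    simp only [e] at h
    rw [Finset.sum_add_distrib, Finset.sum_add_distrib, ← Finset.mul_sum, ← hWdef,
      ← hNf z] at h
    exact h
  -- decomposition of the first inner-product sum
  have hA : ∑ i, ⟪gradient (f' i) (xi i), xstar - xi i⟫
      = ⟪∑ i, g i, xstar - z⟫ + (∑ i, ⟪g i, z - xi i⟫)
        + (∑ i, ⟪gradient f vv - gradient (f' i) vv, xi i - z⟫)
        - lam * ∑ i, ⟪xi i - vv, xstar - xi i⟫ := by
    have hAi : ∀ i, ⟪gradient (f' i) (xi i), xstar - xi i⟫
        = ⟪g i, xstar - z⟫ + ⟪g i, z - xi i⟫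
          + ⟪gradient f vv - gradient (f' i) vv, xi i - z⟫
          - ⟪gradient f vv - gradient (f' i) vv, xstar - z⟫
          - lam * ⟪xi i - vv, xstar - xi i⟫ := by
      intro i
      have e : gradient (f' i) (xi i)
          = g i - (gradient f vv - gradient (f' i) vv) - lam • (xi i - vv) := by
        simp only [hgdef]; abel
      rw [e, inner_sub_left, inner_sub_left, real_inner_smul_left]
      have e3 : ∀ w : E, ⟪w, xstar - xi i⟫ = ⟪w, xstar - z⟫ + ⟪w, z - xi i⟫ := by
        intro w
        rw [← inner_add_right]
        congr 1
        abel
      have e4 : ⟪gradient f vv - gradient (f' i) vv, xi i - z⟫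
          = -⟪gradient f vv - gradient (f' i) vv, z - xi i⟫ := by
        rw [← inner_neg_right]
        congr 1
        abel
      rw [e3 (g i), e3 (gradient f vv - gradient (f' i) vv), e4]
      ring
    rw [Finset.sum_congr rfl fun i _ => hAi i]
    rw [Finset.sum_sub_distrib, Finset.sum_sub_distrib, Finset.sum_add_distrib,
      Finset.sum_add_distrib, ← Finset.mul_sum, ← sum_inner, ← sum_inner, hzsum vv,
      inner_zero_left, sub_zero]
  -- decomposition of the second inner-product sum
  have hC : ∑ i, ⟪gradient (f' i) z, xi i - z⟫
      = - ∑ i, ⟪gradient f z - gradient (f' i) z, xi i - z⟫ := by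
    have e : ∀ i, ⟪gradient (f' i) z, xi i - z⟫
        = ⟪gradient f z, xi i - z⟫ - ⟪gradient f z - gradient (f' i) z, xi i - z⟫ := by
      intro i
      rw [inner_sub_left]
      ring
    rw [Finset.sum_congr rfl fun i _ => e i, Finset.sum_sub_distrib, ← inner_sum, hxz,
      inner_zero_right, zero_sub]
  -- combine the two h-difference sums into dd
  have hDZ : (∑ i, ⟪gradient f vv - gradient (f' i) vv, xi i - z⟫)
      - (∑ i, ⟪gradient f z - gradient (f' i) z, xi i - z⟫)
      = ∑ i, ⟪dd i, z - xi i⟫ := by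
    rw [← Finset.sum_sub_distrib]
    refine Finset.sum_congr rfl fun i _ => ?_
    rw [← inner_sub_left]
    have e1 : (gradient f vv - gradient (f' i) vv) - (gradient f z - gradient (f' i) z)
        = -(dd i) := by simp only [hddef]; abel
    rw [e1, inner_neg_left, ← inner_neg_right]
    congr 1
    abel
  -- quantitative bounds
  have hDsq : ∑ i, ‖dd i‖^2 ≤ (n:ℝ) * (lam^2/4) * Q := by
    have h := hSOD' z vv
    rw [← hQdef] at h
    exact h
  have hGsq : ∑ i, ‖g i‖^2 ≤ (lam^2/4) * S := by
    simp only [hgdef]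
    exact hacc
  have hWu : ∑ i, ‖z - xi i‖^2 = W := by
    rw [hWdef]
    exact Finset.sum_congr rfl fun i _ => by rw [norm_sub_rev]
  have b1 : -((lam/5)*((n:ℝ)*Q) + ((5/16)*lam)*W) ≤ ∑ i, ⟪dd i, z - xi i⟫ := by
    have h0 := sdane_sum_young dd (fun i => z - xi i) ((5/8)*lam) (by positivity)
    rw [hWu] at h0
    have h1 : (1/(2*((5/8)*lam))) * ∑ i, ‖dd i‖^2
        ≤ (1/(2*((5/8)*lam))) * ((n:ℝ) * (lam^2/4) * Q) :=
      mul_le_mul_of_nonneg_left hDsq (by positivity)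
    have h2 : (1/(2*((5/8)*lam))) * ((n:ℝ) * (lam^2/4) * Q) = (lam/5)*((n:ℝ)*Q) := by
      field_simp
      ring
    have h3 : ((5/8)*lam/2) * W = ((5/16)*lam)*W := by ring
    linarith
  have b2 : -((31*lam/200)*S + (25*lam/62)*W) ≤ ∑ i, ⟪g i, z - xi i⟫ := by
    have h0 := sdane_sum_young g (fun i => z - xi i) ((25/31)*lam) (by positivity)
    rw [hWu] at h0
    have h1 : (1/(2*((25/31)*lam))) * ∑ i, ‖g i‖^2
        ≤ (1/(2*((25/31)*lam))) * ((lam^2/4) * S) :=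
      mul_le_mul_of_nonneg_left hGsq (by positivity)
    have h2 : (1/(2*((25/31)*lam))) * ((lam^2/4) * S) = (31*lam/200)*S := by
      field_simp
      ring
    have h3 : ((25/31)*lam/2) * W = (25*lam/62)*W := by ring
    linarith
  have b3 : ⟪∑ i, g i, xstar - z⟫
      = ((n:ℝ)*(lam+μ)) * ((‖xstar - v'‖^2 - ‖z - v'‖^2 - ‖xstar - z‖^2)/2) := by
    rw [hG, real_inner_smul_left, sdane_polar z v' xstar]
  have b4 : (n:ℝ)*((lam+μ)/2)*‖z - v'‖^2 ≤ (lam/8)*S := by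
    have h1 : ‖∑ i, g i‖^2 = ((n:ℝ)*(lam+μ))^2 * ‖z - v'‖^2 := by
      rw [hG, norm_smul, mul_pow, Real.norm_eq_abs, sq_abs]
    have h2 : ‖∑ i, g i‖ ≤ ∑ i, ‖g i‖ := norm_sum_le _ _
    have h3 : (∑ i, ‖g i‖)^2 ≤ (n:ℝ) * ∑ i, ‖g i‖^2 := by
      have h := sq_sum_le_card_mul_sum_sq (s := (Finset.univ : Finset (Fin n)))
        (f := fun i => ‖g i‖)
      rw [Finset.card_univ, Fintype.card_fin] at h
      exact_mod_cast h
    have h4 : ‖∑ i, g i‖^2 ≤ (n:ℝ) * ∑ i, ‖g i‖^2 :=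
      le_trans (pow_le_pow_left₀ (norm_nonneg _) h2 2) h3
    have h5 : ((n:ℝ)*(lam+μ))^2 * ‖z - v'‖^2 ≤ (n:ℝ) * ((lam^2/4) * S) := by
      rw [← h1]
      exact h4.trans (mul_le_mul_of_nonneg_left hGsq hN.le)
    nlinarith [norm_nonneg (z - v'), sq_nonneg ‖z - v'‖,
      mul_pos hN hlm, mul_nonneg (mul_nonneg hμ.le hN.le) (mul_nonneg hlam0.le hSnn),
      mul_nonneg (mul_nonneg hN.le hlm.le) (sq_nonneg ‖z - v'‖)]
  have b5 : ∑ i, ⟪xi i - vv, xstar - xi i⟫ = ((n:ℝ)*‖xstar - vv‖^2 - S - Sst)/2 := by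
    have e : ∀ i, ⟪xi i - vv, xstar - xi i⟫
        = (‖xstar - vv‖^2 - ‖xi i - vv‖^2 - ‖xi i - xstar‖^2)/2 := by
      intro i
      rw [sdane_polar (xi i) vv xstar, norm_sub_rev xstar (xi i)]
    rw [Finset.sum_congr rfl fun i _ => e i, ← Finset.sum_div, Finset.sum_sub_distrib,
      Finset.sum_sub_distrib, Finset.sum_const, Finset.card_univ, Fintype.card_fin,
      nsmul_eq_mul, ← hSdef, ← hSstdef]
  have b6 : S = W + (n:ℝ)*Q := by
    rw [hSdef, hWdef, hQdef]
    exact sdane_mean_split xi z vv hz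
  have b7 : Sst = W + (n:ℝ)*‖xstar - z‖^2 := by
    rw [hSstdef, hWdef]
    rw [sdane_mean_split xi z xstar hz, norm_sub_rev z xstar]
  -- assemble
  have hmain : (n:ℝ) * (f z - f xstar)
      ≤ (n:ℝ) * ((lam/2)*‖vv - xstar‖^2 - ((lam+μ)/2)*‖v' - xstar‖^2) := by
    rw [norm_sub_rev vv xstar, norm_sub_rev v' xstar]
    have hnr1 : 0 ≤ lam * W := mul_nonneg hlam0.le hWnn
    have hnr2 : 0 ≤ lam * ((n:ℝ) * Q) := mul_nonneg hlam0.le (mul_nonneg hN.le hQnn)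
    have hnr3 : 0 ≤ μ * W := mul_nonneg hμ.le hWnn
    have b5l : lam * ∑ i, ⟪xi i - vv, xstar - xi i⟫
        = lam * (((n:ℝ)*‖xstar - vv‖^2 - S - Sst)/2) := by rw [b5]
    have b6l : lam * S = lam * (W + (n:ℝ)*Q) := by rw [← b6]
    have b7l : lam * Sst = lam * (W + (n:ℝ)*‖xstar - z‖^2) := by rw [← b7]
    have b7m : μ * Sst = μ * (W + (n:ℝ)*‖xstar - z‖^2) := by rw [← b7]
    linarith [step1, step2, hA, hC, hDZ, b1, b2, b3, b4, b5l, b6l, b7l, b7m, hnr1, hnr2, hnr3]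
  have := le_of_mul_le_mul_left hmain hN
  linarith


end Round

/-- S-DANE with full client participation, strongly convex case:
if `R ≥ ((μ + 2δ)/μ) · ln(1 + μD²/(2ε))` then `f(x̄^R) − f(x*) ≤ ε`. -/
theorem sdane_communication_rounds
    {E : Type*} [NormedAddCommGroup E] [InnerProductSpace ℝ E] [CompleteSpace E]
    (n : ℕ) (hn : 0 < n)
    (f' : Fin n → E → ℝ) (hdiff : ∀ i, Differentiable ℝ (f' i))
    (f : E → ℝ) (hfdef : f = fun x => (1 / (n : ℝ)) * ∑ i, f' i x)
    (μ : ℝ) (hμ : 0 < μ)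
    (hconv : ∀ i, ∀ x y : E,
      f' i y ≥ f' i x + ⟪gradient (f' i) x, y - x⟫ + (μ / 2) * ‖x - y‖ ^ 2)
    (δ : ℝ) (hδ : 0 < δ)
    (hSOD : ∀ x y : E,
      (1 / (n : ℝ)) * ∑ i, ‖gradient (fun z => f z - f' i z) x
          - gradient (fun z => f z - f' i z) y‖ ^ 2 ≤ δ ^ 2 * ‖x - y‖ ^ 2)
    (lam : ℝ) (hlam : lam = 2 * δ)
    (x v : ℕ → E) (xi : Fin n → ℕ → E)
    (hv0 : v 0 = x 0)
    (hxrec : ∀ r, x (r + 1) = (1 / (n : ℝ)) • ∑ i, xi i r)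
    (hvrec : ∀ r, v (r + 1) = (lam + μ)⁻¹ •
      (lam • v r + μ • x (r + 1) - (1 / (n : ℝ)) • ∑ i, gradient (f' i) (xi i r)))
    (hacc : ∀ r, ∑ i, ‖gradient (f' i) (xi i r) + gradient f (v r)
          - gradient (f' i) (v r) + lam • (xi i r - v r)‖ ^ 2
      ≤ (lam ^ 2 / 4) * ∑ i, ‖xi i r - v r‖ ^ 2)
    (xstar : E) (hstar : ∀ y, f xstar ≤ f y)
    (D : ℝ) (hD : D = ‖x 0 - xstar‖)
    (p : ℝ) (hp : p = 1 + μ / lam)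
    (xbar : ℕ → E)
    (hxbar : ∀ R, xbar R = (∑ r ∈ Icc 1 R, p ^ r)⁻¹ • ∑ r ∈ Icc 1 R, p ^ r • x r) :
    ∀ ε : ℝ, 0 < ε → ∀ R : ℕ, 1 ≤ R →
      ((μ + 2 * δ) / μ) * Real.log (1 + μ * D ^ 2 / (2 * ε)) ≤ (R : ℝ) →
      f (xbar R) - f xstar ≤ ε := by
  have hN : (0:ℝ) < n := by exact_mod_cast hn
  have hlam0 : 0 < lam := by rw [hlam]; linarith
  have hlm : 0 < lam + μ := by linarith
  -- basic differentiability / gradient facts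
  have hfd : Differentiable ℝ f := by
    rw [hfdef]
    exact fun y => ((DifferentiableAt.fun_sum (fun i _ => (hdiff i) y)).const_mul _)
  have hgradf : ∀ y, gradient f y = (1/(n:ℝ)) • ∑ i, gradient (f' i) y := by
    intro y
    rw [hfdef]
    unfold gradient
    rw [fderiv_const_mul (DifferentiableAt.fun_sum fun i _ => (hdiff i) y),
      fderiv_fun_sum (fun i _ => (hdiff i) y), map_smul, map_sum]
  have hsumgrad : ∀ y, ∑ i, gradient (f' i) y = (n:ℝ) • gradient f y := by
    intro y
    rw [hgradf y, smul_smul, mul_one_div_cancel hN.ne', one_smul]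
  have hNf : ∀ y, (n:ℝ) * f y = ∑ i, f' i y := by
    intro y; rw [hfdef]; field_simp
  have hsubgrad : ∀ (i : Fin n) (y : E),
      gradient (fun w => f w - f' i w) y = gradient f y - gradient (f' i) y := by
    intro i y
    unfold gradient
    rw [fderiv_fun_sub (hfd y) ((hdiff i) y), map_sub]
  have hSOD' : ∀ a b : E,
      ∑ i, ‖(gradient f a - gradient (f' i) a) - (gradient f b - gradient (f' i) b)‖^2
        ≤ (n:ℝ) * (lam^2/4) * ‖a-b‖^2 := by
    intro a b
    have h := hSOD a b
    simp only [hsubgrad] at h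
    calc ∑ i, ‖(gradient f a - gradient (f' i) a) - (gradient f b - gradient (f' i) b)‖^2
        = (n:ℝ) * ((1/(n:ℝ)) * ∑ i, ‖(gradient f a - gradient (f' i) a)
            - (gradient f b - gradient (f' i) b)‖^2) := by field_simp
      _ ≤ (n:ℝ) * (δ^2 * ‖a-b‖^2) := mul_le_mul_of_nonneg_left h hN.le
      _ = (n:ℝ) * (lam^2/4) * ‖a-b‖^2 := by rw [hlam]; ring
  -- per-round descent
  have key : ∀ r, f (x (r+1)) - f xstar ≤
      (lam/2)*‖v r - xstar‖^2 - ((lam+μ)/2)*‖v (r+1) - xstar‖^2 := by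
    intro r
    have hz : ∑ i, xi i r = (n:ℝ) • x (r+1) := by
      rw [hxrec r, smul_smul, mul_one_div_cancel hN.ne', one_smul]
    have hv' : (lam + μ) • v (r+1) = lam • v r + μ • x (r+1)
        - (1/(n:ℝ)) • ∑ i, gradient (f' i) (xi i r) := by
      rw [hvrec r, smul_inv_smul₀ hlm.ne']
    exact sdane_round hn f' f hsumgrad hNf μ hμ hconv lam hlam0 hSOD'
      (fun i => xi i r) (v r) (x (r+1)) (v (r+1)) hz hv' (hacc r) xstar
  -- telescoping
  have hp0 : 0 < p := by rw [hp]; positivity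
  have hp1 : 1 < p := by rw [hp]; nlinarith [div_pos hμ hlam0]
  have hplam : lam * p = lam + μ := by rw [hp]; field_simp
  have tele : ∀ R : ℕ, (∑ r ∈ Icc 1 R, p^r * (f (x r) - f xstar))
      + (lam/2)*p^(R+1)*‖v R - xstar‖^2 ≤ (lam/2)*p*‖v 0 - xstar‖^2 := by
    intro R
    induction R with
    | zero => simp
    | succ R ih =>
      rw [Finset.sum_Icc_succ_top (by omega : 1 ≤ R + 1)]
      have hk := key R
      have h2 : p^(R+1)*(f (x (R+1)) - f xstar) ≤
          p^(R+1)*((lam/2)*‖v R - xstar‖^2 - ((lam+μ)/2)*‖v (R+1) - xstar‖^2) :=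
        mul_le_mul_of_nonneg_left hk (by positivity)
      have h3 : p^(R+1)*((lam/2)*‖v R - xstar‖^2 - ((lam+μ)/2)*‖v (R+1) - xstar‖^2)
          = (lam/2)*p^(R+1)*‖v R - xstar‖^2 - (lam/2)*p^(R+1+1)*‖v (R+1) - xstar‖^2 := by
        have : (lam+μ) = lam * p := hplam.symm
        rw [this]; ring
      rw [h3] at h2
      linarith
  -- convexity of f
  have hfconv : ∀ a b : E, f a + ⟪gradient f a, b - a⟫ ≤ f b := by
    intro a b
    have h1 : ∑ i, (f' i a + ⟪gradient (f' i) a, b - a⟫ + (μ/2)*‖a-b‖^2) ≤ ∑ i, f' i b :=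
      Finset.sum_le_sum fun i _ => hconv i a b
    rw [Finset.sum_add_distrib, Finset.sum_add_distrib, ← sum_inner, hsumgrad a,
      real_inner_smul_left, ← Finset.mul_sum, Finset.sum_const, Finset.card_univ,
      Fintype.card_fin, nsmul_eq_mul, ← hNf a, ← hNf b] at h1
    have hnn : 0 ≤ (μ/2)*‖a-b‖^2 := by positivity
    have h4 : (n:ℝ) * (f a + ⟪gradient f a, b - a⟫) ≤ (n:ℝ) * f b := by nlinarith
    have := le_of_mul_le_mul_left h4 hN
    linarith
  intro ε hε R hR1 hRlog
  -- weighted sum facts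
  set P : ℝ := ∑ r ∈ Icc 1 R, p^r with hPdef
  have hP : 0 < P := by
    rw [hPdef]
    apply Finset.sum_pos (fun r _ => pow_pos hp0 r)
    exact Finset.nonempty_Icc.mpr hR1
  have hsum : ∑ r ∈ Icc 1 R, p^r • x r = P • xbar R := by
    rw [hxbar R, smul_inv_smul₀ hP.ne']
  -- Jensen
  have hjen : P * (f (xbar R) - f xstar) ≤ ∑ r ∈ Icc 1 R, p^r * (f (x r) - f xstar) := by
    have h1 : ∑ r ∈ Icc 1 R, p^r * (f (xbar R) + ⟪gradient f (xbar R), x r - xbar R⟫)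
        ≤ ∑ r ∈ Icc 1 R, p^r * f (x r) :=
      Finset.sum_le_sum fun r _ =>
        mul_le_mul_of_nonneg_left (hfconv (xbar R) (x r)) (pow_nonneg hp0.le r)
    have h2 : ∑ r ∈ Icc 1 R, p^r * (f (xbar R) + ⟪gradient f (xbar R), x r - xbar R⟫)
        = P * f (xbar R) + ⟪gradient f (xbar R), ∑ r ∈ Icc 1 R, p^r • (x r - xbar R)⟫ := by
      rw [inner_sum, hPdef, Finset.sum_mul, ← Finset.sum_add_distrib]
      refine Finset.sum_congr rfl fun r _ => ?_
      rw [real_inner_smul_right]; ring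
    have h3 : ∑ r ∈ Icc 1 R, p^r • (x r - xbar R) = 0 := by
      have e : ∀ r, p^r • (x r - xbar R) = p^r • x r - p^r • xbar R := fun r => smul_sub _ _ _
      rw [Finset.sum_congr rfl fun r _ => e r, Finset.sum_sub_distrib, hsum,
        ← Finset.sum_smul, ← hPdef, sub_self]
    have h4 : ∑ r ∈ Icc 1 R, p^r * (f (x r) - f xstar)
        = (∑ r ∈ Icc 1 R, p^r * f (x r)) - P * f xstar := by
      rw [hPdef, Finset.sum_mul, ← Finset.sum_sub_distrib]
      exact Finset.sum_congr rfl fun r _ => by ring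
    rw [h3, inner_zero_right] at h2
    rw [h4]
    nlinarith [h1, h2]
  -- combine telescoping with Jensen
  have hbound : P * (f (xbar R) - f xstar) ≤ (lam/2)*p*D^2 := by
    have ht := tele R
    rw [hv0, ← hD] at ht
    have hnn : 0 ≤ (lam/2)*p^(R+1)*‖v R - xstar‖^2 := by positivity
    linarith
  -- geometric sum
  have hgeo : ∀ K : ℕ, (p - 1) * (∑ r ∈ Icc 1 K, p^r) = p^(K+1) - p := by
    intro K
    induction K with
    | zero => simp
    | succ K ih =>
      rw [Finset.sum_Icc_succ_top (by omega : 1 ≤ K + 1), mul_add, ih]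
      ring
  -- logarithmic estimate
  have hpeq : p = (lam+μ)/lam := by rw [hp]; field_simp
  have hlogp : μ/(lam+μ) ≤ Real.log p := by
    have hx : (0:ℝ) < lam/(lam+μ) := by positivity
    have h1 := Real.log_le_sub_one_of_pos hx
    have h2 : Real.log (lam/(lam+μ)) = - Real.log p := by
      rw [← Real.log_inv]
      congr 1
      rw [hpeq, inv_div]
    have h3 : lam/(lam+μ) - 1 = -(μ/(lam+μ)) := by field_simp; ring
    rw [h2, h3] at h1
    linarith
  set L : ℝ := Real.log (1 + μ * D ^ 2 / (2 * ε)) with hLdef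
  have hL0 : 0 ≤ L := by
    apply Real.log_nonneg
    have : 0 ≤ μ * D ^ 2 / (2 * ε) := by positivity
    linarith
  have hRlog' : L ≤ (R:ℝ) * Real.log p := by
    have h1 : ((μ+lam)/μ) * L ≤ (R:ℝ) := by
      rw [hlam]; exact hRlog
    have h2 : ((μ+lam)/μ) * L * (μ/(lam+μ)) ≤ (R:ℝ) * (μ/(lam+μ)) :=
      mul_le_mul_of_nonneg_right h1 (by positivity)
    have h3 : ((μ+lam)/μ) * L * (μ/(lam+μ)) = L := by field_simp; ring
    have h4 : (R:ℝ) * (μ/(lam+μ)) ≤ (R:ℝ) * Real.log p :=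
      mul_le_mul_of_nonneg_left hlogp (Nat.cast_nonneg R)
    linarith
  have harg : (0:ℝ) < 1 + μ * D ^ 2 / (2 * ε) := by positivity
  have hpow : 1 + μ * D ^ 2 / (2 * ε) ≤ p^R := by
    calc 1 + μ * D ^ 2 / (2 * ε) = Real.exp L := (Real.exp_log harg).symm
      _ ≤ Real.exp ((R:ℝ) * Real.log p) := Real.exp_le_exp.mpr hRlog'
      _ = (Real.exp (Real.log p))^R := Real.exp_nat_mul _ R
      _ = p^R := by rw [Real.exp_log hp0]
  have hfinal : μ/2 * D^2 ≤ (p^R - 1) * ε := by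
    have h1 : μ * D ^ 2 / (2 * ε) ≤ p^R - 1 := by linarith
    have h2 := mul_le_mul_of_nonneg_right h1 hε.le
    have h3 : μ * D ^ 2 / (2 * ε) * ε = μ/2 * D^2 := by field_simp
    linarith
  -- conclude
  have hmu : lam * (p - 1) = μ := by rw [mul_sub, hplam]; ring
  have h5 : (p-1)*((lam/2)*p*D^2) ≤ (p-1)*(P*ε) := by
    have h6 := mul_le_mul_of_nonneg_left hfinal hp0.le
    have e1 : (p-1)*((lam/2)*p*D^2) = p * (μ/2 * D^2) := by
      linear_combination (p * D^2/2) * hmu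
    have e2 : (p-1)*(P*ε) = p * ((p^R - 1) * ε) := by
      linear_combination ε * hgeo R
    rw [e1, e2]
    exact h6
  have h7 : (lam/2)*p*D^2 ≤ P*ε := le_of_mul_le_mul_left h5 (by linarith)
  have h8 : P * (f (xbar R) - f xstar) ≤ P * ε := by linarith
  have := le_of_mul_le_mul_left h8 hP
  linarith
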